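/- Let e be idempotent mod m, b, c ∈ R_m^e, and D = gcd{n : 1 ≤ n ≤ |b|_m, b^n ∈ orb(c)}. Then D divides |b|_m, b^D ∈ orb(c), and for every k ≥ 1: b^k ∈ orb(c) if and only if D | k. -/
import Mathlib

/-- `e` is an idempotent residue modulo `m`: `e^2 ≡ e (mod m)`. -/
def Idem (m : ℕ) (e : ZMod m) : Prop := e ^ 2 = e

/-- The order `|a|_m`: the least `n ≥ 1` such that `a^n` is idempotent mod `m`. -/
noncomputable def ord (m : ℕ) (a : ZMod m) : ℕ := sInf {n | 1 ≤ n ∧ Idem m (a ^ n)}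

/-- `a` is regular modulo `m`: `a^(|a|_m + 1) ≡ a (mod m)`. -/
noncomputable def Reg (m : ℕ) (a : ZMod m) : Prop := a ^ (ord m a + 1) = a

/-- `R_m^e`: the regular residues mod `m` whose idempotent power is `e`. -/
noncomputable def Rme (m : ℕ) (e : ZMod m) : Set (ZMod m) :=
  {a | Reg m a ∧ a ^ (ord m a) = e}

/-- The orbit of `a` modulo `m`: `{a^j mod m : 1 ≤ j ≤ |a|_m}`. -/
noncomputable def orb (m : ℕ) (a : ZMod m) : Finset (ZMod m) :=
  (Finset.Icc 1 (ord m a)).image (a ^ ·)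

private lemma exists_idem_pow (m : ℕ) (hm : 1 ≤ m) (b : ZMod m) :
    ∃ n, 1 ≤ n ∧ Idem m (b ^ n) := by
  haveI : NeZero m := ⟨by omega⟩
  obtain ⟨i, j, hij, hpow⟩ : ∃ i j : ℕ, i ≠ j ∧ b ^ i = b ^ j := by
    obtain ⟨i, j, h1, h2⟩ := Finite.exists_ne_map_eq_of_infinite (fun n : ℕ => b ^ n)
    exact ⟨i, j, h1, h2⟩
  wlog h : i < j generalizing i j
  · exact this j i hij.symm hpow.symm (by omega)
  set d := j - i with hd
  have hd1 : 1 ≤ d := by omega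
  have key : ∀ n, b ^ (i + n + d) = b ^ (i + n) := by
    intro n
    have h0 : b ^ (i + d) = b ^ i := by
      rw [hd, Nat.add_sub_cancel' h.le]; exact hpow.symm
    calc b ^ (i + n + d) = b ^ (i + d) * b ^ n := by rw [← pow_add]; ring_nf
    _ = b ^ i * b ^ n := by rw [h0]
    _ = b ^ (i + n) := by rw [← pow_add]
  have key2 : ∀ k n, b ^ (i + n + k * d) = b ^ (i + n) := by
    intro k
    induction k with
    | zero => simp
    | succ k ih =>
        intro n
        have h1 : i + n + (k+1) * d = i + (n + d) + k * d := by ring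
        rw [h1, ih, ← add_assoc, key]
  set N := (i+1) * d with hNdef
  have hge : i < N := by
    have h5 : i + 1 ≤ N := by rw [hNdef]; exact Nat.le_mul_of_pos_right (i+1) hd1
    omega
  refine ⟨N, by omega, ?_⟩
  show (b ^ N) ^ 2 = b ^ N
  have h2 : (b ^ N) ^ 2 = b ^ (i + (N - i) + (i+1) * d) := by
    rw [← pow_mul]
    congr 1
    omega
  rw [h2, key2]
  congr 1
  omega

private lemma ord_pos (m : ℕ) (hm : 1 ≤ m) (b : ZMod m) : 1 ≤ ord m b := by
  obtain ⟨n, hn1, hn2⟩ := exists_idem_pow m hm b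
  have hne : {n | 1 ≤ n ∧ Idem m (b ^ n)}.Nonempty := ⟨n, hn1, hn2⟩
  exact (Nat.sInf_mem hne).1

/-- Periodicity/reduction: if `b^(t+1) = b` with `t ≥ 1`, then for `n ≥ 1`,
`b^n = b^((n-1) % t + 1)`. -/
private lemma pow_reduce (m : ℕ) (b : ZMod m) (t : ℕ) (ht : 1 ≤ t) (hper : b ^ (t+1) = b) :
    ∀ n, 1 ≤ n → b ^ n = b ^ ((n-1) % t + 1) := by
  intro n
  induction n using Nat.strong_induction_on with
  | _ n ih =>
    intro hn1
    by_cases hle : n ≤ t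
    · have : (n-1) % t = n - 1 := Nat.mod_eq_of_lt (by omega)
      rw [this]
      congr 1
      omega
    · push_neg at hle
      have hstep : b ^ n = b ^ (n - t) := by
        have h1 : b ^ n = b ^ (n - t - 1) * b ^ (t + 1) := by
          rw [← pow_add]; congr 1; omega
        have h2 : b ^ (n - t) = b ^ (n - t - 1) * b := by
          rw [← pow_succ]; congr 1; omega
        rw [h1, hper, h2]
      rw [hstep, ih (n - t) (by omega) (by omega)]
      congr 2
      have : n - 1 = (n - t - 1) + t := by omega
      rw [this, Nat.add_mod_right]

/-- With `D = gcd{n : 1 ≤ n ≤ |b|_m, b^n ∈ orb(c)}`: `D ∣ |b|_m`, `b^D ∈ orb(c)`,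
and for every `k ≥ 1`, `b^k ∈ orb(c) ↔ D ∣ k`. -/
theorem D_properties (m : ℕ) (hm : 1 ≤ m) (e : ZMod m) (he : Idem m e)
    (b c : ZMod m) (hb : b ∈ Rme m e) (hc : c ∈ Rme m e)
    (D : ℕ) (hD : D = ((Finset.Icc 1 (ord m b)).filter (fun n => b ^ n ∈ orb m c)).gcd id) :
    D ∣ ord m b ∧ b ^ D ∈ orb m c ∧
      ∀ k : ℕ, 1 ≤ k → (b ^ k ∈ orb m c ↔ D ∣ k) := by
  obtain ⟨hbreg, hbe⟩ := hb
  obtain ⟨hcreg, hce⟩ := hc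
  set t := ord m b with htdef
  set s := ord m c with hsdef
  have ht : 1 ≤ t := ord_pos m hm b
  have hs : 1 ≤ s := ord_pos m hm c
  have hbred := pow_reduce m b t ht hbreg
  have hcred := pow_reduce m c s hs hcreg
  -- congruent exponents give equal powers of b
  have hcong : ∀ j k, 1 ≤ j → 1 ≤ k → j % t = k % t → b ^ j = b ^ k := by
    intro j k hj hk hjk
    rw [hbred j hj, hbred k hk]
    have h2 : (j-1) + 1 ≡ (k-1) + 1 [MOD t] := by
      rwa [show j-1+1 = j by omega, show k-1+1 = k by omega]
    have h3 : (j-1) % t = (k-1) % t := Nat.ModEq.add_right_cancel' 1 h2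
    rw [h3]
  -- every positive power of c is in orb c
  have hmemorb : ∀ j, 1 ≤ j → c ^ j ∈ orb m c := by
    intro j hj
    rw [hcred j hj]
    apply Finset.mem_image_of_mem
    rw [Finset.mem_Icc]
    have : (j-1) % s < s := Nat.mod_lt _ (by omega)
    omega
  -- orb membership characterization
  have horb : ∀ x, x ∈ orb m c ↔ ∃ j, 1 ≤ j ∧ x = c ^ j := by
    intro x
    constructor
    · intro hx
      obtain ⟨j, hj, hjx⟩ := Finset.mem_image.mp hx
      rw [Finset.mem_Icc] at hj
      exact ⟨j, hj.1, hjx.symm⟩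
    · rintro ⟨j, hj, rfl⟩
      exact hmemorb j hj
  -- T is closed under addition
  have hTadd : ∀ i j, b ^ i ∈ orb m c → b ^ j ∈ orb m c → b ^ (i+j) ∈ orb m c := by
    intro i j hi hj
    obtain ⟨a1, ha1, h1⟩ := (horb _).mp hi
    obtain ⟨a2, ha2, h2⟩ := (horb _).mp hj
    have : b ^ (i+j) = c ^ (a1 + a2) := by rw [pow_add, pow_add, h1, h2]
    rw [this]
    exact hmemorb _ (by omega)
  have hTmul : ∀ a, b ^ a ∈ orb m c → ∀ x, 1 ≤ x → b ^ (x*a) ∈ orb m c := by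
    intro a ha x
    induction x with
    | zero => omega
    | succ x ih =>
        intro _
        by_cases hx : 1 ≤ x
        · have : (x+1)*a = x*a + a := by ring
          rw [this]
          exact hTadd _ _ (ih hx) ha
        · have : x = 0 := by omega
          subst this
          simpa using ha
  -- closure under gcd
  have hTgcd : ∀ a1 a2, 1 ≤ a1 → 1 ≤ a2 → b ^ a1 ∈ orb m c → b ^ a2 ∈ orb m c →
      b ^ (Nat.gcd a1 a2) ∈ orb m c := by
    intro a1 a2 ha1 ha2 hb1 hb2
    set g := Nat.gcd a1 a2 with hg
    have hg1 : 1 ≤ g := Nat.gcd_pos_of_pos_left a2 (by omega)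
    set A := Nat.gcdA a1 a2 with hA
    set B := Nat.gcdB a1 a2 with hB
    have hBez : (g:ℤ) = a1 * A + a2 * B := Nat.gcd_eq_gcd_ab a1 a2
    have htz : (t:ℤ) ≠ 0 := by exact_mod_cast (by omega : t ≠ 0)
    have hAm0 : 0 ≤ A % t := Int.emod_nonneg A htz
    have hBm0 : 0 ≤ B % t := Int.emod_nonneg B htz
    set X : ℕ := (A % t + t).toNat with hXdef
    set Y : ℕ := (B % t + t).toNat with hYdef
    have hX0 : (X:ℤ) = A % t + t := Int.toNat_of_nonneg (by omega)
    have hY0 : (Y:ℤ) = B % t + t := Int.toNat_of_nonneg (by omega)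
    have hX1 : 1 ≤ X := by
      have : (1:ℤ) ≤ (X:ℤ) := by rw [hX0]; omega
      exact_mod_cast this
    have hY1 : 1 ≤ Y := by
      have : (1:ℤ) ≤ (Y:ℤ) := by rw [hY0]; omega
      exact_mod_cast this
    set n := X * a1 + Y * a2 with hn
    have hn1 : 1 ≤ n := by
      have := Nat.mul_pos hX1 ha1
      omega
    have hnT : b ^ n ∈ orb m c :=
      hTadd _ _ (hTmul a1 hb1 X hX1) (hTmul a2 hb2 Y hY1)
    -- n ≡ g mod t
    have hXA : (X:ℤ) ≡ A [ZMOD (t:ℤ)] := by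
      show (X:ℤ) % t = A % t
      rw [hX0, Int.add_emod, Int.emod_self, add_zero, Int.emod_emod_of_dvd (A % ↑t) dvd_rfl,
        Int.emod_emod_of_dvd A dvd_rfl]
    have hYB : (Y:ℤ) ≡ B [ZMOD (t:ℤ)] := by
      show (Y:ℤ) % t = B % t
      rw [hY0, Int.add_emod, Int.emod_self, add_zero, Int.emod_emod_of_dvd (B % ↑t) dvd_rfl,
        Int.emod_emod_of_dvd B dvd_rfl]
    have hng : (n:ℤ) ≡ g [ZMOD (t:ℤ)] := by
      have h1 : ((X:ℤ) * a1 + (Y:ℤ) * a2) ≡ (A * a1 + B * a2) [ZMOD (t:ℤ)] :=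
        (hXA.mul_right _).add (hYB.mul_right _)
      have h2 : (n:ℤ) = (X:ℤ) * a1 + (Y:ℤ) * a2 := by push_cast [hn]; ring
      have h3 : (g:ℤ) = A * a1 + B * a2 := by rw [hBez]; ring
      rw [h2, h3]
      exact h1
    have hmod : n % t = g % t := by
      have := hng.dvd
      have h4 : n ≡ g [MOD t] := by
        rw [Nat.modEq_iff_dvd]
        exact this
      exact h4
    rw [← hcong n g hn1 hg1 hmod]
    exact hnT
  -- gcd over a finset
  have hgcdset : ∀ S : Finset ℕ, (∀ x ∈ S, 1 ≤ x ∧ b ^ x ∈ orb m c) → S.Nonempty →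
      1 ≤ S.gcd id ∧ b ^ (S.gcd id) ∈ orb m c := by
    intro F
    induction F using Finset.induction_on with
    | empty => intro _ h; simp at h
    | @insert a S ha ih =>
        intro hall _
        rw [Finset.gcd_insert]
        rcases S.eq_empty_or_nonempty with rfl | hSne
        · simp only [Finset.gcd_empty, gcd_zero_right, id_eq]
          simpa using hall a (Finset.mem_insert_self a _)
        · have h1 := hall a (Finset.mem_insert_self a S)
          have h2 := ih (fun x hx => hall x (Finset.mem_insert_of_mem hx)) hSne
          show 1 ≤ Nat.gcd (id a) (S.gcd id) ∧ b ^ Nat.gcd (id a) (S.gcd id) ∈ orb m c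
          simp only [id_eq]
          refine ⟨Nat.gcd_pos_of_pos_left _ h1.1, ?_⟩
          exact hTgcd a (S.gcd id) h1.1 h2.1 h1.2 h2.2
  -- the defining set
  set S := (Finset.Icc 1 t).filter (fun n => b ^ n ∈ orb m c) with hS
  have htmem : t ∈ S := by
    rw [hS, Finset.mem_filter, Finset.mem_Icc]
    refine ⟨⟨ht, le_refl t⟩, ?_⟩
    rw [hbe, ← hce]
    exact hmemorb s hs
  have hSne : S.Nonempty := ⟨t, htmem⟩
  have hSall : ∀ x ∈ S, 1 ≤ x ∧ b ^ x ∈ orb m c := by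
    intro x hx
    rw [hS, Finset.mem_filter, Finset.mem_Icc] at hx
    exact ⟨hx.1.1, hx.2⟩
  have hDt : D ∣ t := by
    rw [hD]
    exact Finset.gcd_dvd htmem
  obtain ⟨hD1, hDorb⟩ : 1 ≤ D ∧ b ^ D ∈ orb m c := by
    rw [hD]; exact hgcdset S hSall hSne
  refine ⟨hDt, hDorb, ?_⟩
  intro k hk
  constructor
  · intro hkorb
    set k' := (k-1) % t + 1 with hk'
    have hk'le : k' ≤ t := by
      have : (k-1) % t < t := Nat.mod_lt _ (by omega)
      omega
    have hkk' : b ^ k' = b ^ k := (hbred k hk).symm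
    have hk'S : k' ∈ S := by
      rw [hS, Finset.mem_filter, Finset.mem_Icc]
      exact ⟨⟨by omega, hk'le⟩, by rw [hkk']; exact hkorb⟩
    have hDk' : D ∣ k' := hD ▸ Finset.gcd_dvd hk'S
    -- k ≡ k' mod t, and D ∣ t
    have hmodtt : k' ≡ k [MOD t] := by
      have h1 : (k-1) % t ≡ k - 1 [MOD t] := Nat.mod_modEq _ _
      have h2 := h1.add_right 1
      rwa [show k - 1 + 1 = k by omega] at h2
    have hmodD : k' ≡ k [MOD D] := hmodtt.of_dvd hDt
    have : k ≡ 0 [MOD D] := (hmodD.symm).trans (Nat.modEq_zero_iff_dvd.mpr hDk')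
    exact Nat.modEq_zero_iff_dvd.mp this
  · rintro ⟨q, rfl⟩
    have hq : 1 ≤ q := by
      rcases Nat.eq_zero_or_pos q with rfl | h
      · simp at hk
      · exact h
    have := hTmul D hDorb q hq
    rwa [mul_comm] at this
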